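/- Let a ∈ ℝ₊ⁿ with ∑ a_i = 1, and suppose the indices are ordered so that b₁/a₁ ≤ b₂/a₂ ≤ … ≤ b_n/a_n (all a_i > 0). Let k be the smallest index with ∑_{i=1}^k a_i ≥ 1/2. Then x* = b_k/a_k minimizes g(x) = ∑_{i=1}^n |a_i x − b_i| over ℝ. -/

import Mathlib

theorem stmt15 (n : ℕ) (a b : Fin n → ℝ) (ha : ∀ i, 0 < a i)
    (hsum : ∑ i, a i = 1)
    (hord : ∀ i j : Fin n, i ≤ j → b i / a i ≤ b j / a j)
    (k : Fin n)
    (hk : (1 : ℝ) / 2 ≤ ∑ i ∈ Finset.univ.filter (· ≤ k), a i)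
    (hk' : ∀ j : Fin n, j < k → ∑ i ∈ Finset.univ.filter (· ≤ j), a i < 1 / 2) :
    ∀ x : ℝ, (∑ i, |a i * (b k / a k) - b i|) ≤ ∑ i, |a i * x - b i| := by
  intro x
  set c : Fin n → ℝ := fun i => b i / a i with hc
  have hab : ∀ i, a i * c i = b i := fun i => by
    rw [hc, mul_div_cancel₀ _ (ha i).ne']
  have habs : ∀ (y : ℝ) (i : Fin n), |a i * y - b i| = a i * |y - c i| := by
    intro y i
    rw [← hab i, ← mul_sub, abs_mul, abs_of_pos (ha i)]
  simp only [habs]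
  rw [← sub_nonneg, ← Finset.sum_sub_distrib]
  set t := x - c k with ht
  rcases le_total (c k) x with hx | hx
  · -- use split at i ≤ k
    set S := ∑ i ∈ Finset.univ.filter (· ≤ k), a i with hS
    have hSc : ∑ i ∈ Finset.univ.filter (fun i => ¬ i ≤ k), a i = 1 - S := by
      have h := Finset.sum_filter_add_sum_filter_not Finset.univ (fun i => i ≤ k) a
      rw [hsum] at h
      linarith
    have h1 : S * t ≤ ∑ i ∈ Finset.univ.filter (· ≤ k),
        (a i * |x - c i| - a i * |c k - c i|) := by
      rw [hS, Finset.sum_mul]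
      apply Finset.sum_le_sum
      intro i hi
      simp only [Finset.mem_filter] at hi
      have h1 : c i ≤ c k := hord i k hi.2
      have h2 : |c k - c i| = c k - c i := abs_of_nonneg (by linarith)
      have h3 : x - c i ≤ |x - c i| := le_abs_self _
      rw [h2]
      nlinarith [(ha i).le]
    have h2 : -((1 - S) * t) ≤ ∑ i ∈ Finset.univ.filter (fun i => ¬ i ≤ k),
        (a i * |x - c i| - a i * |c k - c i|) := by
      rw [← hSc, Finset.sum_mul, ← Finset.sum_neg_distrib]
      apply Finset.sum_le_sum
      intro i hi
      simp only [Finset.mem_filter] at hi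
      have h1 : c k ≤ c i := hord k i (le_of_not_ge hi.2)
      have h2 : |c k - c i| = -(c k - c i) := abs_of_nonpos (by linarith)
      have h3 : -(x - c i) ≤ |x - c i| := neg_le_abs _
      rw [h2]
      nlinarith [(ha i).le]
    have hsplit := Finset.sum_filter_add_sum_filter_not Finset.univ (fun i => i ≤ k)
      (fun i => a i * |x - c i| - a i * |c k - c i|)
    have ht0 : 0 ≤ t := by rw [ht]; linarith
    have : (1:ℝ)/2 ≤ S := hk
    nlinarith [h1, h2, hsplit]
  · -- use split at i < k
    have hA : ∑ i ∈ Finset.univ.filter (· < k), a i < 1/2 := by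
      rcases Nat.eq_zero_or_pos k.val with h0 | h0
      · have he : Finset.univ.filter (· < k) = ∅ := by
          ext i
          simp only [Finset.mem_filter, Finset.mem_univ, true_and, Finset.notMem_empty,
            iff_false, Fin.lt_def, h0]
          omega
        rw [he]
        norm_num
      · have hjlt : k.val - 1 < n := lt_of_le_of_lt (Nat.pred_le _) k.isLt
        set j : Fin n := ⟨k.val - 1, hjlt⟩ with hj
        have hjk : j < k := by
          rw [Fin.lt_def]; simp [hj]; omega
        have he : Finset.univ.filter (· < k) = Finset.univ.filter (· ≤ j) := by
          ext i
          simp only [Finset.mem_filter, Finset.mem_univ, true_and, Fin.lt_def, Fin.le_def, hj]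
          omega
        rw [he]
        exact hk' j hjk
    set A := ∑ i ∈ Finset.univ.filter (· < k), a i with hAdef
    have hAc : ∑ i ∈ Finset.univ.filter (fun i => ¬ i < k), a i = 1 - A := by
      have h := Finset.sum_filter_add_sum_filter_not Finset.univ (fun i => i < k) a
      rw [hsum] at h
      linarith
    have h1 : A * t ≤ ∑ i ∈ Finset.univ.filter (· < k),
        (a i * |x - c i| - a i * |c k - c i|) := by
      rw [hAdef, Finset.sum_mul]
      apply Finset.sum_le_sum
      intro i hi
      simp only [Finset.mem_filter] at hi
      have h1 : c i ≤ c k := hord i k hi.2.le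
      have h2 : |c k - c i| = c k - c i := abs_of_nonneg (by linarith)
      have h3 : x - c i ≤ |x - c i| := le_abs_self _
      rw [h2]
      nlinarith [(ha i).le]
    have h2 : -((1 - A) * t) ≤ ∑ i ∈ Finset.univ.filter (fun i => ¬ i < k),
        (a i * |x - c i| - a i * |c k - c i|) := by
      rw [← hAc, Finset.sum_mul, ← Finset.sum_neg_distrib]
      apply Finset.sum_le_sum
      intro i hi
      simp only [Finset.mem_filter] at hi
      have h1 : c k ≤ c i := hord k i (le_of_not_gt hi.2)
      have h2 : |c k - c i| = -(c k - c i) := abs_of_nonpos (by linarith)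
      have h3 : -(x - c i) ≤ |x - c i| := neg_le_abs _
      rw [h2]
      nlinarith [(ha i).le]
    have hsplit := Finset.sum_filter_add_sum_filter_not Finset.univ (fun i => i < k)
      (fun i => a i * |x - c i| - a i * |c k - c i|)
    have ht0 : t ≤ 0 := by rw [ht]; linarith
    nlinarith [h1, h2, hsplit]
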